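/- Let (H=(V∪R, A∪E), M=(R,r_M)) be a simply matroid-rooted mixed hypergraph and define b(X) = r_M(R)(|V_X|−1) + r_M(R_X) for X ⊆ A∪E. Then the family I = { X ⊆ A∪E : b(Y) ≥ |Y| for all nonempty Y ⊆ X } is the family of independent sets of a matroid on A∪E (the Tanigawa matroid). -/

import Mathlib

open Set

/-- One step along an arc of `B` in the digraph given by tail/head maps. -/
def stepOn {α β : Type} (tl hd : β → α) (B : Set β) (u v : α) : Prop :=
  ∃ a ∈ B, tl a = u ∧ hd a = v

/-- Reachability using only arcs of `B`. -/
def reachOn {α β : Type} (tl hd : β → α) (B : Set β) (u v : α) : Prop :=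
  Relation.ReflTransGen (stepOn tl hd B) u v

/-- The vertex set of the arc set `B` together with the root `r`. -/
def vertsOf {α β : Type} (tl hd : β → α) (B : Set β) (r : α) : Set α :=
  insert r (tl '' B ∪ hd '' B)

/-- `B` is an `r`-arborescence: no arc enters the root, every other vertex of `B`
has exactly one entering arc, and every vertex of `B` is reachable from `r` in `B`. -/
noncomputable def IsArbor {α β : Type} (tl hd : β → α) (B : Set β) (r : α) : Prop :=
  (∀ a ∈ B, hd a ≠ r) ∧
  (∀ v ∈ vertsOf tl hd B r, v ≠ r → {a ∈ B | hd a = v}.ncard = 1) ∧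
  (∀ v ∈ vertsOf tl hd B r, reachOn tl hd B r v)

/-- Number of arcs entering the vertex set `X`. -/
noncomputable def dIn {α β : Type} (tl hd : β → α) (X : Set α) : ℕ :=
  {a : β | hd a ∈ X ∧ tl a ∉ X}.ncard


/-- Reachability in the whole digraph. -/
def reaches {α β : Type} (tl hd : β → α) (u v : α) : Prop :=
  reachOn tl hd Set.univ u v

/-- `P_X^D`: the set of vertices from which some vertex of `X` is reachable. -/
def Pset {α β : Type} (tl hd : β → α) (X : Set α) : Set α :=
  {v | ∃ x ∈ X, reaches tl hd v x}

/-- A matroid given by its rank function. -/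
structure RankFn (α : Type) where
  rk : Set α → ℕ
  rk_empty : rk ∅ = 0
  subcard : ∀ X : Set α, X.Finite → rk X ≤ X.ncard
  mono : ∀ X Y : Set α, X ⊆ Y → rk X ≤ rk Y
  submod : ∀ X Y : Set α, rk (X ∪ Y) + rk (X ∩ Y) ≤ rk X + rk Y
  unit : ∀ (X : Set α) (y : α), rk (insert y X) ≤ rk X + 1

/-- `B` is a basis of `X` in the matroid `M`. -/
def IsBasisOf {α : Type} (M : RankFn α) (B X : Set α) : Prop :=
  B ⊆ X ∧ B.ncard = M.rk B ∧ M.rk B = M.rk X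

/-- Vertices incident to an edge of a mixed hypergraph (dyperedges are `Sum.inl`,
hyperedges are `Sum.inr`). -/
def incVerts {α δ ε : Type} (hdD : δ → α) (tlD : δ → Set α) (vE : ε → Set α) :
    δ ⊕ ε → Set α
  | Sum.inl a => insert (hdD a) (tlD a)
  | Sum.inr e => vE e

/-- `V_X`: vertices of `V` incident to some edge of `X`. -/
def VXset {α δ ε : Type} (hdD : δ → α) (tlD : δ → Set α) (vE : ε → Set α)
    (V : Set α) (X : Set (δ ⊕ ε)) : Set α :=
  V ∩ ⋃ x ∈ X, incVerts hdD tlD vE x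

/-- `R_X`: vertices of `R` incident to some dyperedge of `X`. -/
def RXset {α δ ε : Type} (hdD : δ → α) (tlD : δ → Set α)
    (R : Set α) (X : Set (δ ⊕ ε)) : Set α :=
  R ∩ ⋃ a ∈ {a : δ | Sum.inl a ∈ X}, insert (hdD a) (tlD a)

/-- The Tanigawa function `b(X) = r_M(R)(|V_X|−1) + r_M(R_X)`. -/
noncomputable def bTan {α δ ε : Type} (hdD : δ → α) (tlD : δ → Set α)
    (vE : ε → Set α) (V R : Set α) (M : RankFn α) (X : Set (δ ⊕ ε)) : ℤ :=
  (M.rk R : ℤ) * (((VXset hdD tlD vE V X).ncard : ℤ) - 1)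
    + (M.rk (RXset hdD tlD R X) : ℤ)


section TanigawaAux

open Set

variable {E : Type} [Fintype E]

/-- Edmonds' exchange argument for an integer-valued, monotone, submodular
set function. -/
private lemma edmonds_exchange (b : Set E → ℤ)
    (hmono : ∀ ⦃A B : Set E⦄, A ⊆ B → b A ≤ b B)
    (hsub : ∀ A B : Set E, b (A ∪ B) + b (A ∩ B) ≤ b A + b B)
    (X X' : Set E)
    (hX : ∀ Y ⊆ X, Y.Nonempty → (Y.ncard : ℤ) ≤ b Y)
    (hX' : ∀ Y ⊆ X', Y.Nonempty → (Y.ncard : ℤ) ≤ b Y)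
    (hc : X.ncard < X'.ncard) :
    ∃ y ∈ X' \ X, ∀ Y ⊆ insert y X, Y.Nonempty → (Y.ncard : ℤ) ≤ b Y := by
  classical
  by_contra hfail
  push_neg at hfail
  set Tight : Set E → Prop := fun T => T ⊆ X ∧ T.Nonempty ∧ b T = (T.ncard : ℤ) with hTightdef
  -- Step A: for each y ∈ X' \ X there is a tight S ⊆ X with b (insert y S) ≤ |S|
  have hSy : ∀ y ∈ X' \ X, ∃ S, Tight S ∧ b (insert y S) ≤ (S.ncard : ℤ) := by
    intro y hy
    obtain ⟨Y, hYsub, hYne, hYb⟩ := hfail y hy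
    have hyY : y ∈ Y := by
      by_contra hyY
      have hYX : Y ⊆ X := by
        intro z hz
        rcases hYsub hz with h | h
        · exact absurd (h ▸ hz) hyY
        · exact h
      exact absurd (hX Y hYX hYne) (not_le.mpr hYb)
    set S := Y \ {y} with hSdef
    have hSX : S ⊆ X := by
      intro z hz
      rcases hYsub hz.1 with h | h
      · exact absurd h hz.2
      · exact h
    have hYins : Y = insert y S := by
      rw [hSdef, insert_diff_singleton, insert_eq_self.2 hyY]
    have hyS : y ∉ S := fun h => h.2 rfl
    have hYcard : Y.ncard = S.ncard + 1 := by
      rw [hYins]; exact ncard_insert_of_notMem hyS (toFinite S)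
    have hSne : S.Nonempty := by
      rcases S.eq_empty_or_nonempty with h | h
      · exfalso
        have hY1 : Y = {y} := by rw [hYins, h]; simp
        have h1 : (({y} : Set E).ncard : ℤ) ≤ b {y} :=
          hX' {y} (singleton_subset_iff.2 hy.1) (singleton_nonempty y)
        rw [ncard_singleton] at h1
        rw [hY1, ncard_singleton] at hYb
        omega
      · exact h
    have h1 : (S.ncard : ℤ) ≤ b S := hX S hSX hSne
    have h2 : b S ≤ b Y := hmono (by rw [hYins]; exact subset_insert _ _)
    have h3 : b Y ≤ (S.ncard : ℤ) := by
      have hYc : (Y.ncard : ℤ) = (S.ncard : ℤ) + 1 := by exact_mod_cast hYcard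
      omega
    refine ⟨S, ⟨hSX, hSne, le_antisymm (h2.trans h3) h1⟩, ?_⟩
    rw [← hYins]; exact h3
  -- unions of intersecting tight sets are tight
  have tight_union : ∀ T₁ T₂, Tight T₁ → Tight T₂ → (T₁ ∩ T₂).Nonempty → Tight (T₁ ∪ T₂) := by
    intro T₁ T₂ h₁ h₂ hne
    obtain ⟨h₁X, h₁ne, h₁b⟩ := h₁
    obtain ⟨h₂X, h₂ne, h₂b⟩ := h₂
    have hUX : T₁ ∪ T₂ ⊆ X := union_subset h₁X h₂X
    have hIle : ((T₁ ∩ T₂).ncard : ℤ) ≤ b (T₁ ∩ T₂) :=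
      hX _ (fun z hz => h₁X hz.1) hne
    have hUge : ((T₁ ∪ T₂).ncard : ℤ) ≤ b (T₁ ∪ T₂) :=
      hX _ hUX (h₁ne.mono subset_union_left)
    have hs := hsub T₁ T₂
    have hcard : ((T₁ ∪ T₂).ncard : ℤ) + ((T₁ ∩ T₂).ncard : ℤ)
        = (T₁.ncard : ℤ) + (T₂.ncard : ℤ) := by
      exact_mod_cast ncard_union_add_ncard_inter T₁ T₂ (toFinite _) (toFinite _)
    exact ⟨hUX, h₁ne.mono subset_union_left, by omega⟩
  -- Step B: choose a maximal tight set absorbing each y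
  have hchoose : ∀ y : E, y ∈ X' \ X → ∃ T, Tight T ∧ b (insert y T) ≤ b T ∧
      ∀ T', Tight T' → (T ∩ T').Nonempty → T' ⊆ T := by
    intro y hy
    obtain ⟨S, hS, hSb⟩ := hSy y hy
    have hFfin : {T : Set E | Tight T ∧ S ⊆ T}.Finite := Set.toFinite _
    obtain ⟨T, ⟨hT, hST⟩, hTmax⟩ :=
      (by obtain ⟨T, hT, hm⟩ := Set.Finite.exists_maximalFor Set.ncard _ hFfin ⟨S, hS, subset_rfl⟩; exact ⟨T, hT, fun T' hT' hle => le_antisymm hle (hm hT' hle)⟩ :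
        ∃ T ∈ {T : Set E | Tight T ∧ S ⊆ T}, ∀ T' ∈ {T : Set E | Tight T ∧ S ⊆ T}, T.ncard ≤ T'.ncard → T.ncard = T'.ncard)
    have habs : ∀ T', Tight T' → (T ∩ T').Nonempty → T' ⊆ T := by
      intro T' hT' hne
      have hU : Tight (T ∪ T') := tight_union T T' hT hT' hne
      have hUF : (T ∪ T') ∈ {T : Set E | Tight T ∧ S ⊆ T} :=
        ⟨hU, hST.trans subset_union_left⟩
      have hle : T.ncard ≤ (T ∪ T').ncard :=
        ncard_le_ncard subset_union_left (toFinite _)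
      have heq := hTmax _ hUF hle
      have hTeq : T = T ∪ T' :=
        Set.eq_of_subset_of_ncard_le subset_union_left heq.ge (toFinite _)
      exact hTeq ▸ subset_union_right
    have hyX : y ∉ X := hy.2
    have hins : b (insert y T) ≤ b T := by
      have hs := hsub T (insert y S)
      have hUeq : T ∪ insert y S = insert y T := by
        rw [union_insert, union_eq_self_of_subset_right hST]
      have hIeq : T ∩ insert y S = S := by
        apply subset_antisymm
        · rintro z ⟨hzT, hz⟩
          rcases mem_insert_iff.1 hz with rfl | hz
          · exact absurd (hT.1 hzT) hyX
          · exact hz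
        · exact subset_inter hST (subset_insert _ _)
      rw [hUeq, hIeq] at hs
      have hbS := hT.2.2
      -- need b S = S.ncard for the chosen maximal T? no: use hS.2.2
      have hbS' := hS.2.2
      linarith
    exact ⟨T, hT, hins, habs⟩
  choose! T hT using hchoose
  have hT1 : ∀ y ∈ X' \ X, Tight (T y) := fun y hy => (hT y hy).1
  have hT2 : ∀ y ∈ X' \ X, b (insert y (T y)) ≤ b (T y) := fun y hy => (hT y hy).2.1
  have hT3 : ∀ y ∈ X' \ X, ∀ T', Tight T' → (T y ∩ T').Nonempty → T' ⊆ T y :=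
    fun y hy => (hT y hy).2.2
  -- adding a whole fiber does not increase b
  have hTU : ∀ y ∈ X' \ X, ∀ F : Set E,
      F ⊆ {z | z ∈ X' \ X ∧ T z = T y} → b (T y ∪ F) ≤ b (T y) := by
    intro y hy F
    refine Set.Finite.induction_on
      (motive := fun F _ => F ⊆ {z | z ∈ X' \ X ∧ T z = T y} → b (T y ∪ F) ≤ b (T y))
      F (Set.toFinite F) (fun _ => by rw [union_empty]) ?_
    intro a s ha _hsfin ih hsub'
    ·
      have hssub : s ⊆ {z | z ∈ X' \ X ∧ T z = T y} :=
        (subset_insert a s).trans hsub'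
      have haf : a ∈ X' \ X ∧ T a = T y := hsub' (mem_insert a s)
      have hsdisj : ∀ z ∈ s, z ∉ X := fun z hz => (hssub hz).1.2
      have hstep := hsub (T y ∪ s) (insert a (T y))
      have hU : (T y ∪ s) ∪ insert a (T y) = T y ∪ insert a s := by
        ext z
        simp only [mem_union, mem_insert_iff]
        tauto
      have hI : (T y ∪ s) ∩ insert a (T y) = T y := by
        apply subset_antisymm
        · rintro z ⟨hz1, hz2⟩
          rcases mem_insert_iff.1 hz2 with rfl | hz2
          · rcases hz1 with h | h
            · exact absurd ((hT1 y hy).1 h) haf.1.2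
            · exact absurd h ha
          · exact hz2
        · exact subset_inter subset_union_left (subset_insert _ _)
      rw [hU, hI] at hstep
      have hinsa : b (insert a (T y)) ≤ b (T y) := by
        have h := hT2 a haf.1
        rwa [haf.2] at h
      have hih := ih hssub
      linarith
  -- per-group counting
  have hgroup : ∀ y ∈ X' \ X,
      ({z | z ∈ X' \ X ∧ T z = T y}.ncard : ℤ) ≤ ((T y \ X').ncard : ℤ) := by
    intro y hy
    set Fib := {z | z ∈ X' \ X ∧ T z = T y} with hFibdef
    have hFibsub : Fib ⊆ X' \ X := fun z hz => hz.1
    have hTyX : T y ⊆ X := (hT1 y hy).1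
    set Z := (X' ∩ T y) ∪ Fib with hZdef
    have hZsub : Z ⊆ X' := union_subset inter_subset_left (hFibsub.trans diff_subset)
    have hZne : Z.Nonempty := ⟨y, Or.inr ⟨hy, rfl⟩⟩
    have h1 : (Z.ncard : ℤ) ≤ b Z := hX' Z hZsub hZne
    have h2 : b Z ≤ b (T y ∪ Fib) :=
      hmono (union_subset_union inter_subset_right (subset_refl Fib))
    have h3 : b (T y ∪ Fib) ≤ b (T y) := hTU y hy Fib subset_rfl
    have hdisjZ : Disjoint (X' ∩ T y) Fib := by
      rw [disjoint_left]
      intro z hz1 hz2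
      exact hz2.1.2 (hTyX hz1.2)
    have hZcard : (Z.ncard : ℤ) = ((X' ∩ T y).ncard : ℤ) + (Fib.ncard : ℤ) := by
      exact_mod_cast ncard_union_eq hdisjZ (toFinite _) (toFinite _)
    have hTcard : ((T y ∩ X').ncard : ℤ) + ((T y \ X').ncard : ℤ) = ((T y).ncard : ℤ) := by
      exact_mod_cast ncard_inter_add_ncard_diff_eq_ncard (T y) X' (toFinite _)
    have hbT : b (T y) = ((T y).ncard : ℤ) := (hT1 y hy).2.2
    have hIcomm : ((X' ∩ T y).ncard : ℤ) = ((T y ∩ X').ncard : ℤ) := by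
      rw [inter_comm]
    omega
  -- final counting using finsets
  have hDfin : (X' \ X).Finite := toFinite _
  set D' : Finset E := hDfin.toFinset with hD'def
  have hcard_fib : D'.card = ∑ t ∈ D'.image T, (D'.filter (fun z => T z = t)).card :=
    Finset.card_eq_sum_card_fiberwise (fun x hx => Finset.mem_image_of_mem T hx)
  have hfiber_le : ∀ t ∈ D'.image T,
      (D'.filter (fun z => T z = t)).card ≤ ((t \ X').toFinite.toFinset).card := by
    intro t ht
    obtain ⟨y, hy, rfl⟩ := Finset.mem_image.1 ht
    have hy' : y ∈ X' \ X := hDfin.mem_toFinset.1 hy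
    have hg := hgroup y hy'
    have e1 : {z | z ∈ X' \ X ∧ T z = T y}.ncard = (D'.filter (fun z => T z = T y)).card := by
      rw [← Set.ncard_coe_finset]
      congr 1
      ext z
      simp only [Finset.coe_filter, hD'def, Set.Finite.mem_toFinset, mem_setOf_eq,
        mem_diff, Finset.mem_coe]
    have e2 : (T y \ X').ncard = ((T y \ X').toFinite.toFinset).card := by
      rw [← Set.ncard_coe_finset, Set.Finite.coe_toFinset]
    omega
  have hdisjTT : ∀ t₁ ∈ D'.image T, ∀ t₂ ∈ D'.image T, t₁ ≠ t₂ →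
      Disjoint ((t₁ \ X').toFinite.toFinset) ((t₂ \ X').toFinite.toFinset) := by
    intro t₁ h₁ t₂ h₂ hne
    obtain ⟨y₁, hy₁, rfl⟩ := Finset.mem_image.1 h₁
    obtain ⟨y₂, hy₂, rfl⟩ := Finset.mem_image.1 h₂
    have hy₁' : y₁ ∈ X' \ X := hDfin.mem_toFinset.1 hy₁
    have hy₂' : y₂ ∈ X' \ X := hDfin.mem_toFinset.1 hy₂
    rw [Finset.disjoint_left]
    intro z hz1 hz2
    rw [Set.Finite.mem_toFinset] at hz1 hz2
    have hne₁ : (T y₁ ∩ T y₂).Nonempty := ⟨z, hz1.1, hz2.1⟩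
    have hne₂ : (T y₂ ∩ T y₁).Nonempty := ⟨z, hz2.1, hz1.1⟩
    have hsub1 : T y₂ ⊆ T y₁ := hT3 y₁ hy₁' _ (hT1 y₂ hy₂') hne₁
    have hsub2 : T y₁ ⊆ T y₂ := hT3 y₂ hy₂' _ (hT1 y₁ hy₁') hne₂
    exact hne (subset_antisymm hsub2 hsub1)
  have hsum : ∑ t ∈ D'.image T, (D'.filter (fun z => T z = t)).card
      ≤ ∑ t ∈ D'.image T, ((t \ X').toFinite.toFinset).card :=
    Finset.sum_le_sum hfiber_le
  have hbU : ∑ t ∈ D'.image T, ((t \ X').toFinite.toFinset).card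
      = ((D'.image T).biUnion (fun t => (t \ X').toFinite.toFinset)).card :=
    (Finset.card_biUnion hdisjTT).symm
  have hsubXX : (D'.image T).biUnion (fun t => (t \ X').toFinite.toFinset)
      ⊆ (X \ X').toFinite.toFinset := by
    intro z hz
    rw [Finset.mem_biUnion] at hz
    obtain ⟨t, ht, hz⟩ := hz
    obtain ⟨y, hy, rfl⟩ := Finset.mem_image.1 ht
    have hy' : y ∈ X' \ X := hDfin.mem_toFinset.1 hy
    rw [Set.Finite.mem_toFinset] at hz ⊢
    exact ⟨(hT1 y hy').1 hz.1, hz.2⟩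
  have hcard1 : D'.card = (X' \ X).ncard := by
    rw [hD'def, Set.ncard_eq_toFinset_card _ hDfin]
  have hcard2 : ((X \ X').toFinite.toFinset).card = (X \ X').ncard := by
    rw [Set.ncard_eq_toFinset_card _ (toFinite (X \ X'))]
  have hfinal : (X' \ X).ncard ≤ (X \ X').ncard := by
    calc (X' \ X).ncard = D'.card := hcard1.symm
      _ = ∑ t ∈ D'.image T, (D'.filter (fun z => T z = t)).card := hcard_fib
      _ ≤ ∑ t ∈ D'.image T, ((t \ X').toFinite.toFinset).card := hsum
      _ = ((D'.image T).biUnion (fun t => (t \ X').toFinite.toFinset)).card := hbU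
      _ ≤ ((X \ X').toFinite.toFinset).card := Finset.card_le_card hsubXX
      _ = (X \ X').ncard := hcard2
  have e1 : (X ∩ X').ncard + (X \ X').ncard = X.ncard :=
    ncard_inter_add_ncard_diff_eq_ncard X X' (toFinite _)
  have e2 : (X' ∩ X).ncard + (X' \ X).ncard = X'.ncard :=
    ncard_inter_add_ncard_diff_eq_ncard X' X (toFinite _)
  have e3 : (X ∩ X').ncard = (X' ∩ X).ncard := by rw [inter_comm]
  omega

end TanigawaAux

section BTanAux

open Set

variable {α δ ε : Type} [Fintype α] [Fintype δ] [Fintype ε]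

private lemma VX_mono (hdD : δ → α) (tlD : δ → Set α) (vE : ε → Set α) (V : Set α)
    {A B : Set (δ ⊕ ε)} (h : A ⊆ B) :
    VXset hdD tlD vE V A ⊆ VXset hdD tlD vE V B :=
  inter_subset_inter_right _ (biUnion_subset_biUnion_left h)

private lemma RX_mono (hdD : δ → α) (tlD : δ → Set α) (R : Set α)
    {A B : Set (δ ⊕ ε)} (h : A ⊆ B) :
    RXset hdD tlD R A ⊆ RXset hdD tlD R B :=
  inter_subset_inter_right _ (biUnion_subset_biUnion_left (fun a ha => h ha))

private lemma VX_union (hdD : δ → α) (tlD : δ → Set α) (vE : ε → Set α) (V : Set α)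
    (A B : Set (δ ⊕ ε)) :
    VXset hdD tlD vE V (A ∪ B) = VXset hdD tlD vE V A ∪ VXset hdD tlD vE V B := by
  unfold VXset
  rw [biUnion_union, inter_union_distrib_left]

private lemma RX_union (hdD : δ → α) (tlD : δ → Set α) (R : Set α)
    (A B : Set (δ ⊕ ε)) :
    RXset hdD tlD R (A ∪ B) = RXset hdD tlD R A ∪ RXset hdD tlD R B := by
  unfold RXset
  have h : {a : δ | Sum.inl a ∈ A ∪ B} = {a : δ | Sum.inl a ∈ A} ∪ {a : δ | Sum.inl a ∈ B} := by
    ext a; simp [mem_union]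
  rw [h, biUnion_union, inter_union_distrib_left]

private lemma bTan_mono (hdD : δ → α) (tlD : δ → Set α) (vE : ε → Set α)
    (V R : Set α) (M : RankFn α) {A B : Set (δ ⊕ ε)} (h : A ⊆ B) :
    bTan hdD tlD vE V R M A ≤ bTan hdD tlD vE V R M B := by
  unfold bTan
  have h0 : (0 : ℤ) ≤ (M.rk R : ℤ) := Int.natCast_nonneg _
  have h1 : ((VXset hdD tlD vE V A).ncard : ℤ) ≤ ((VXset hdD tlD vE V B).ncard : ℤ) := by
    exact_mod_cast ncard_le_ncard (VX_mono hdD tlD vE V h) (toFinite _)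
  have h2 : (M.rk (RXset hdD tlD R A) : ℤ) ≤ (M.rk (RXset hdD tlD R B) : ℤ) := by
    exact_mod_cast M.mono _ _ (RX_mono hdD tlD R h)
  have h3 : (M.rk R : ℤ) * (((VXset hdD tlD vE V A).ncard : ℤ) - 1)
      ≤ (M.rk R : ℤ) * (((VXset hdD tlD vE V B).ncard : ℤ) - 1) :=
    mul_le_mul_of_nonneg_left (by linarith) h0
  linarith

private lemma bTan_submod (hdD : δ → α) (tlD : δ → Set α) (vE : ε → Set α)
    (V R : Set α) (M : RankFn α) (A B : Set (δ ⊕ ε)) :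
    bTan hdD tlD vE V R M (A ∪ B) + bTan hdD tlD vE V R M (A ∩ B)
      ≤ bTan hdD tlD vE V R M A + bTan hdD tlD vE V R M B := by
  have h0 : (0 : ℤ) ≤ (M.rk R : ℤ) := Int.natCast_nonneg _
  set VA := VXset hdD tlD vE V A with hVA
  set VB := VXset hdD tlD vE V B with hVB
  set RA := RXset hdD tlD R A with hRA
  set RB := RXset hdD tlD R B with hRB
  have hVU : VXset hdD tlD vE V (A ∪ B) = VA ∪ VB := VX_union hdD tlD vE V A B
  have hRU : RXset hdD tlD R (A ∪ B) = RA ∪ RB := RX_union hdD tlD R A B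
  have hVI : VXset hdD tlD vE V (A ∩ B) ⊆ VA ∩ VB :=
    subset_inter (VX_mono hdD tlD vE V inter_subset_left)
      (VX_mono hdD tlD vE V inter_subset_right)
  have hRI : RXset hdD tlD R (A ∩ B) ⊆ RA ∩ RB :=
    subset_inter (RX_mono hdD tlD R inter_subset_left)
      (RX_mono hdD tlD R inter_subset_right)
  have hVcard : ((VA ∪ VB).ncard : ℤ) + ((VA ∩ VB).ncard : ℤ)
      = (VA.ncard : ℤ) + (VB.ncard : ℤ) := by
    exact_mod_cast ncard_union_add_ncard_inter VA VB (toFinite _) (toFinite _)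
  have hVIcard : ((VXset hdD tlD vE V (A ∩ B)).ncard : ℤ) ≤ ((VA ∩ VB).ncard : ℤ) := by
    exact_mod_cast ncard_le_ncard hVI (toFinite _)
  have hRsub : (M.rk (RA ∪ RB) : ℤ) + (M.rk (RA ∩ RB) : ℤ)
      ≤ (M.rk RA : ℤ) + (M.rk RB : ℤ) := by exact_mod_cast M.submod RA RB
  have hRmono : (M.rk (RXset hdD tlD R (A ∩ B)) : ℤ) ≤ (M.rk (RA ∩ RB) : ℤ) := by
    exact_mod_cast M.mono _ _ hRI
  unfold bTan
  rw [hVU, hRU, ← hVA, ← hVB, ← hRA, ← hRB]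
  have key : (M.rk R : ℤ) * (((VA ∪ VB).ncard : ℤ) - 1)
      + (M.rk R : ℤ) * (((VXset hdD tlD vE V (A ∩ B)).ncard : ℤ) - 1)
      ≤ (M.rk R : ℤ) * ((VA.ncard : ℤ) - 1) + (M.rk R : ℤ) * ((VB.ncard : ℤ) - 1) := by
    have hx : (((VA ∪ VB).ncard : ℤ) - 1) + (((VXset hdD tlD vE V (A ∩ B)).ncard : ℤ) - 1)
        ≤ ((VA.ncard : ℤ) - 1) + ((VB.ncard : ℤ) - 1) := by linarith
    nlinarith [mul_le_mul_of_nonneg_left hx h0]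
  linarith

end BTanAux

/-- The Tanigawa matroid: the family `{X ⊆ A∪E : b(Y) ≥ |Y| for all nonempty
Y ⊆ X}` induced by the Tanigawa function is the family of independent sets of a
matroid on the edge set of a simply matroid-rooted mixed hypergraph. -/
theorem tanigawa_matroid
    {α δ ε : Type} [Fintype α] [Fintype δ] [Fintype ε]
    (V R : Set α) (hdD : δ → α) (tlD : δ → Set α) (vE : ε → Set α)
    (hpart : V ∪ R = Set.univ) (hdisj : Disjoint V R)
    (htail : ∀ a : δ, (tlD a).Nonempty)
    (hheadtail : ∀ a : δ, hdD a ∉ tlD a)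
    (hhyp2 : ∀ e : ε, 2 ≤ (vE e).ncard)
    (hrootA : ∀ a : δ, hdD a ∉ R)
    (hrootE : ∀ e : ε, vE e ∩ R = ∅)
    (hleave : ∀ a : δ, ∀ r ∈ R, r ∈ tlD a → tlD a = {r})
    (hsimple : ∀ r ∈ R, {a : δ | r ∈ tlD a}.ncard ≤ 1)
    (M : RankFn α) :
    ∀ I : Set (Set (δ ⊕ ε)),
      I = {X : Set (δ ⊕ ε) | ∀ Y ⊆ X, Y.Nonempty →
            (Y.ncard : ℤ) ≤ bTan hdD tlD vE V R M Y} →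
      ((∅ : Set (δ ⊕ ε)) ∈ I ∧
       (∀ X X' : Set (δ ⊕ ε), X ⊆ X' → X' ∈ I → X ∈ I) ∧
       (∀ X ∈ I, ∀ X' ∈ I, X.ncard < X'.ncard →
          ∃ y ∈ X' \ X, insert y X ∈ I)) := by
  intro I hI
  subst hI
  refine ⟨?_, ?_, ?_⟩
  · intro Y hY hYne
    exact absurd (Set.subset_empty_iff.1 hY) hYne.ne_empty
  · intro X X' hsub hX' Y hY hYne
    exact hX' Y (hY.trans hsub) hYne
  · intro X hX X' hX' hc
    obtain ⟨y, hy, hins⟩ := edmonds_exchange (bTan hdD tlD vE V R M)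
      (fun A B h => bTan_mono hdD tlD vE V R M h)
      (bTan_submod hdD tlD vE V R M) X X' hX hX' hc
    exact ⟨y, hy, hins⟩
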